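/- Let λ be infinite and κ = (2^λ)⁺. Given an equivalence relation assignment X ↦ e_X on subsets X of κ of size ≤ λ such that each e_X has at most 2^λ classes, there is a club of ordinals ρ < κ with the property: for every X ⊆ ρ with |X| ≤ λ and every β with ρ < β < κ, there exists γ with ρ < γ < ρ⁺ (the next point of the club) such that β e_X γ. -/

import Mathlib

open Cardinal Set

/-- If `A` is a set of ordinals of size at most `c`, all below `(succ c).ord`,
then its supremum is below `(succ c).ord`. -/
private theorem aux_sup_lt {c : Cardinal.{0}} (hc : ℵ₀ ≤ c) {A : Set Ordinal.{0}}
    (hA : #A ≤ Cardinal.lift.{1} c)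
    (hbd : ∀ a ∈ A, a < (Order.succ c).ord) : sSup A < (Order.succ c).ord := by
  rcases A.eq_empty_or_nonempty with rfl | hne
  · rw [csSup_empty]
    have h0 : (0 : Cardinal) < Order.succ c :=
      (aleph0_pos.trans_le hc).trans (Order.lt_succ c)
    calc (⊥ : Ordinal) = (0 : Cardinal).ord := by simp
      _ < _ := Cardinal.ord_lt_ord.2 h0
  · haveI : Nonempty A := hne.to_subtype
    obtain ⟨j⟩ : Nonempty (A ↪ ULift.{1} c.out) := by
      rw [← Cardinal.le_def, Cardinal.mk_uLift, Cardinal.mk_out]; exact hA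
    have ht : Function.Surjective (Function.invFun j) :=
      Function.invFun_surjective j.injective
    set f : c.out → Ordinal := fun i => ((Function.invFun j ⟨i⟩ : A) : Ordinal) with hf
    have hAr : A = Set.range f := by
      ext a
      constructor
      · intro ha
        obtain ⟨i, hi⟩ := ht ⟨a, ha⟩
        refine ⟨i.down, ?_⟩
        rw [hf]
        simp only []
        rw [show (⟨i.down⟩ : ULift.{1} c.out) = i from rfl, hi]
      · rintro ⟨i, rfl⟩
        exact (Function.invFun j ⟨i⟩).2
    rw [hAr]
    have hss : sSup (Set.range f) = ⨆ i, f i := rfl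
    rw [hss]
    refine Ordinal.iSup_lt_ord ?_ ?_
    · rw [Cardinal.mk_out, (Cardinal.isRegular_succ hc).cof_eq]
      exact Order.lt_succ c
    · intro i
      exact hbd _ (Function.invFun j ⟨i⟩).2

/-- The one-step closure lemma. -/
private theorem aux_step (l : Cardinal.{0}) (hl : Cardinal.aleph0 ≤ l)
    (e : Set Ordinal → Ordinal → Ordinal → Prop)
    (hEquiv : ∀ X : Set Ordinal, Cardinal.mk X ≤ Cardinal.lift.{1} l →
      Equivalence (fun β γ : {β : Ordinal // sSup X < β} => e X β.1 γ.1))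
    (hClasses : ∀ X : Set Ordinal, Cardinal.mk X ≤ Cardinal.lift.{1} l →
      Cardinal.mk (Quot (fun β γ : {β : Ordinal // sSup X < β} => e X β.1 γ.1)) ≤
        Cardinal.lift.{1} (2 ^ l))
    (ρ0 : Ordinal) (hρ0 : ρ0 < (Order.succ ((2 : Cardinal) ^ l)).ord) :
    ∃ ρ1 : Ordinal, ρ0 < ρ1 ∧ ρ1 < (Order.succ ((2 : Cardinal) ^ l)).ord ∧
      ∀ X : Set Ordinal, X ⊆ Set.Iio ρ0 → Cardinal.mk X ≤ Cardinal.lift.{1} l →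
        ∀ β : Ordinal, ρ0 < β → β < (Order.succ ((2 : Cardinal) ^ l)).ord →
          ∃ γ : Ordinal, ρ0 < γ ∧ γ < ρ1 ∧ e X β γ := by
  classical
  have h2l : ℵ₀ ≤ (2 : Cardinal) ^ l := hl.trans (cantor l).le
  have hκpos : (0 : Ordinal) < (Order.succ ((2 : Cardinal) ^ l)).ord :=
    (Cardinal.isRegular_succ h2l).ord_pos
  -- choice of representatives
  let g : (X : Set Ordinal) →
      Quot (fun β γ : {β : Ordinal // sSup X < β} => e X β.1 γ.1) → Ordinal :=
    fun X q =>
      if h : ∃ b : {β : Ordinal // sSup X < β},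
          (ρ0 < b.1 ∧ b.1 < (Order.succ ((2 : Cardinal) ^ l)).ord) ∧ Quot.mk _ b = q then h.choose.1 else 0
  let S : Set (Set Ordinal) := {X | X ⊆ Set.Iio ρ0 ∧ #X ≤ Cardinal.lift.{1} l}
  let A : Set Ordinal := ⋃ X ∈ S, Set.range (g X)
  have hbd : ∀ a ∈ A, a < (Order.succ ((2 : Cardinal) ^ l)).ord := by
    intro a ha
    simp only [A, Set.mem_iUnion] at ha
    obtain ⟨X, hX, q, rfl⟩ := ha
    by_cases h : ∃ b : {β : Ordinal // sSup X < β},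
        (ρ0 < b.1 ∧ b.1 < (Order.succ ((2 : Cardinal) ^ l)).ord) ∧ Quot.mk _ b = q
    · have : g X q = h.choose.1 := dif_pos h
      rw [this]
      exact h.choose_spec.1.2
    · have : g X q = 0 := dif_neg h
      rw [this]
      exact hκpos
  -- cardinality bound on A
  have hcard_Iio : #(Set.Iio ρ0 : Set Ordinal) ≤ Cardinal.lift.{1} (2 ^ l) := by
    rw [Ordinal.mk_Iio_ordinal]
    exact Cardinal.lift_le.2 (Order.lt_succ_iff.1 (Cardinal.lt_ord.1 hρ0))
  have hμ : (Cardinal.lift.{1} (2 ^ l)) ^ (Cardinal.lift.{1} l) = Cardinal.lift.{1} (2 ^ l) := by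
    rw [← Cardinal.lift_power, ← Cardinal.power_mul, Cardinal.mul_eq_self hl]
  have hS : #S ≤ Cardinal.lift.{1} (2 ^ l) := by
    have h1 : #S ≤ max #(Set.Iio ρ0 : Set Ordinal) ℵ₀ ^ Cardinal.lift.{1} l :=
      Cardinal.mk_bounded_subset_le _ _
    refine h1.trans ?_
    rw [← hμ]
    refine Cardinal.power_le_power_right (max_le hcard_Iio ?_)
    exact Cardinal.aleph0_le_lift.2 h2l
  have hA : #A ≤ Cardinal.lift.{1} (2 ^ l) := by
    have h1 : #A ≤ #S * ⨆ X : S, #(Set.range (g X.1)) := Cardinal.mk_biUnion_le _ _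
    have h2 : (⨆ X : S, #(Set.range (g X.1))) ≤ Cardinal.lift.{1} (2 ^ l) := by
      refine csSup_le' ?_
      rintro x ⟨X, rfl⟩
      exact Cardinal.mk_range_le.trans (hClasses X.1 X.2.2)
    calc #A ≤ #S * ⨆ X : S, #(Set.range (g X.1)) := h1
      _ ≤ Cardinal.lift.{1} (2 ^ l) * Cardinal.lift.{1} (2 ^ l) := mul_le_mul' hS h2
      _ = Cardinal.lift.{1} (2 ^ l) := Cardinal.mul_eq_self (Cardinal.aleph0_le_lift.2 h2l)
  have hsup : sSup A < (Order.succ ((2 : Cardinal) ^ l)).ord := aux_sup_lt h2l hA hbd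
  have hmax : max (sSup A) ρ0 < max (sSup A) ρ0 + 1 := by
    rw [Ordinal.add_one_eq_succ]
    exact Order.lt_succ _
  refine ⟨max (sSup A) ρ0 + 1, (le_max_right _ _).trans_lt hmax, ?_, ?_⟩
  · rw [Ordinal.add_one_eq_succ]
    exact (Cardinal.isSuccLimit_ord (h2l.trans (Order.le_succ _))).succ_lt (max_lt hsup hρ0)
  · intro X hXsub hXcard β hβ1 hβ2
    have hXS : X ∈ S := ⟨hXsub, hXcard⟩
    have hsX : sSup X ≤ ρ0 := csSup_le' fun x hx => (hXsub hx).le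
    have hβX : sSup X < β := hsX.trans_lt hβ1
    set q : Quot (fun β γ : {β : Ordinal // sSup X < β} => e X β.1 γ.1) :=
      Quot.mk _ (⟨β, hβX⟩ : {b : Ordinal // sSup X < b}) with hq
    have hex : ∃ b : {β' : Ordinal // sSup X < β'},
        (ρ0 < b.1 ∧ b.1 < (Order.succ ((2 : Cardinal) ^ l)).ord) ∧ Quot.mk _ b = q := ⟨⟨β, hβX⟩, ⟨hβ1, hβ2⟩, rfl⟩
    have hgq : g X q = hex.choose.1 := dif_pos hex
    obtain ⟨⟨hg1, hg2⟩, hg3⟩ := hex.choose_spec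
    refine ⟨g X q, by rw [hgq]; exact hg1, ?_, ?_⟩
    · have hmem : g X q ∈ A := Set.mem_biUnion hXS ⟨q, rfl⟩
      have hle : g X q ≤ sSup A := le_csSup ⟨(Order.succ ((2 : Cardinal) ^ l)).ord, fun a ha => (hbd a ha).le⟩ hmem
      exact (hle.trans (le_max_left _ _)).trans_lt hmax
    · rw [hgq]
      have hEq : Quot.mk _ hex.choose =
          Quot.mk (fun β γ : {β : Ordinal // sSup X < β} => e X β.1 γ.1) ⟨β, hβX⟩ := hg3
      have hrel := ((hEquiv X hXcard).eqvGen_iff).1 (Quot.eqvGen_exact hEq)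
      exact (hEquiv X hXcard).symm hrel

/-- For κ = (2^λ)⁺ and equivalence relations e_X (X ⊆ κ, |X| ≤ λ) each with at most
2^λ classes, there is a continuous strictly increasing sequence ⟨ρ_η : η < κ⟩ such
that every e_X-class (X ⊆ ρ_η) with a representative above ρ_η has a representative
in the interval (ρ_η, ρ_{η+1}). -/
theorem stmt14 (l : Cardinal.{0}) (hl : Cardinal.aleph0 ≤ l)
    (κ : Cardinal.{0}) (hκ : κ = Order.succ (2 ^ l))
    (e : Set Ordinal → Ordinal → Ordinal → Prop)
    (hEquiv : ∀ X : Set Ordinal, Cardinal.mk X ≤ Cardinal.lift.{1} l →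
      Equivalence (fun β γ : {β : Ordinal // sSup X < β} => e X β.1 γ.1))
    (hClasses : ∀ X : Set Ordinal, Cardinal.mk X ≤ Cardinal.lift.{1} l →
      Cardinal.mk (Quot (fun β γ : {β : Ordinal // sSup X < β} => e X β.1 γ.1)) ≤
        Cardinal.lift.{1} (2 ^ l)) :
    ∃ ρ : Ordinal → Ordinal,
      (∀ η < κ.ord, ρ η < κ.ord) ∧
      StrictMonoOn ρ (Set.Iio κ.ord) ∧
      (∀ η < κ.ord, Order.IsSuccLimit η → ρ η = sSup (ρ '' Set.Iio η)) ∧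
      (∀ η < κ.ord, ∀ X : Set Ordinal, X ⊆ Set.Iio (ρ η) →
        Cardinal.mk X ≤ Cardinal.lift.{1} l →
        ∀ β : Ordinal, ρ η < β → β < κ.ord →
          ∃ γ : Ordinal, ρ η < γ ∧ γ < ρ (η + 1) ∧ e X β γ) := by
  classical
  subst hκ
  have h2l : ℵ₀ ≤ (2 : Cardinal) ^ l := hl.trans (cantor l).le
  have step := aux_step l hl e hEquiv hClasses
  let Ftot : Ordinal → Ordinal := fun x => if h : x < (Order.succ ((2 : Cardinal) ^ l)).ord then (step x h).choose else 0
  have hFspec : ∀ x, ∀ hx : x < (Order.succ ((2 : Cardinal) ^ l)).ord, x < Ftot x ∧ Ftot x < (Order.succ ((2 : Cardinal) ^ l)).ord ∧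
      ∀ X : Set Ordinal, X ⊆ Set.Iio x → Cardinal.mk X ≤ Cardinal.lift.{1} l →
        ∀ β : Ordinal, x < β → β < (Order.succ ((2 : Cardinal) ^ l)).ord →
          ∃ γ : Ordinal, x < γ ∧ γ < Ftot x ∧ e X β γ := by
    intro x hx
    have : Ftot x = (step x hx).choose := dif_pos hx
    rw [this]
    exact (step x hx).choose_spec
  let ρ : Ordinal → Ordinal := fun o =>
    Ordinal.limitRecOn o (0 : Ordinal) (fun _ ih => Ftot ih)
      (fun o _ ih => sSup {x | ∃ o', ∃ h : o' < o, ih o' h = x})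
  have hρ0 : ρ 0 = 0 := Ordinal.limitRecOn_zero _ _ _
  have hρsucc : ∀ o, ρ (Order.succ o) = Ftot (ρ o) := fun o =>
    Ordinal.limitRecOn_succ o _ _ _
  have hρlim : ∀ o, Order.IsSuccLimit o → ρ o = sSup (ρ '' Set.Iio o) := by
    intro o h
    have := Ordinal.limitRecOn_limit o (0 : Ordinal) (fun _ ih => Ftot ih)
      (fun o _ ih => sSup {x | ∃ o', ∃ h : o' < o, ih o' h = x}) h
    rw [show ρ o = _ from this]
    congr 1
    ext x
    simp only [Set.mem_setOf_eq, Set.mem_image, Set.mem_Iio]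
    constructor
    · rintro ⟨o', h', rfl⟩; exact ⟨o', h', rfl⟩
    · rintro ⟨o', h', rfl⟩; exact ⟨o', h', rfl⟩
  have hcard : ∀ o : Ordinal, o < (Order.succ ((2 : Cardinal) ^ l)).ord → #(ρ '' Set.Iio o) ≤ Cardinal.lift.{1} (2 ^ l) := by
    intro o ho
    refine Cardinal.mk_image_le.trans ?_
    rw [Ordinal.mk_Iio_ordinal]
    exact Cardinal.lift_le.2 (Order.lt_succ_iff.1 (Cardinal.lt_ord.1 ho))
  have key : ∀ η, η < (Order.succ ((2 : Cardinal) ^ l)).ord → (∀ ζ < η, ρ ζ < ρ η) ∧ ρ η < (Order.succ ((2 : Cardinal) ^ l)).ord := by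
    intro η
    induction η using Ordinal.limitRecOn with
    | zero =>
      intro _
      refine ⟨fun ζ hζ => absurd hζ (not_lt_zero (a := ζ)), ?_⟩
      rw [hρ0]
      exact (Cardinal.isRegular_succ h2l).ord_pos
    | add_one o ih =>
      rw [Ordinal.add_one_eq_succ]
      intro hso
      have ho : o < (Order.succ ((2 : Cardinal) ^ l)).ord := (Order.lt_succ o).trans hso
      obtain ⟨ihmono, ihlt⟩ := ih ho
      have hs := hFspec (ρ o) ihlt
      constructor
      · intro ζ hζ
        rw [hρsucc]
        rcases (Order.lt_succ_iff.1 hζ).lt_or_eq with h | rfl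
        · exact (ihmono ζ h).trans hs.1
        · exact hs.1
      · rw [hρsucc]
        exact hs.2.1
    | limit o hlim ih =>
      intro ho
      have hρo := hρlim o hlim
      have hbd : ∀ a ∈ ρ '' Set.Iio o, a < (Order.succ ((2 : Cardinal) ^ l)).ord := by
        rintro a ⟨ζ, hζ, rfl⟩
        exact (ih ζ hζ (hζ.trans ho)).2
      have hlt : ρ o < (Order.succ ((2 : Cardinal) ^ l)).ord := by
        rw [hρo]
        exact aux_sup_lt h2l (hcard o ho) hbd
      refine ⟨?_, hlt⟩
      intro ζ hζ
      have hsζ : Order.succ ζ < o := hlim.succ_lt hζ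
      have h1 : ρ ζ < ρ (Order.succ ζ) :=
        (ih (Order.succ ζ) hsζ (hsζ.trans ho)).1 ζ (Order.lt_succ ζ)
      have h2 : ρ (Order.succ ζ) ≤ sSup (ρ '' Set.Iio o) :=
        le_csSup ⟨(Order.succ ((2 : Cardinal) ^ l)).ord, fun a ha => (hbd a ha).le⟩ ⟨Order.succ ζ, hsζ, rfl⟩
      rw [hρo]
      exact h1.trans_le h2
  refine ⟨ρ, fun η hη => (key η hη).2, fun a ha b hb hab => (key b hb).1 a hab,
    fun η hη h => hρlim η h, ?_⟩
  intro η hη X hXsub hXcard β hβ1 hβ2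
  have hρη := (key η hη).2
  have hp := (hFspec (ρ η) hρη).2.2 X hXsub hXcard β hβ1 hβ2
  rw [Ordinal.add_one_eq_succ, hρsucc]
  exact hp
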